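/- A morphism in the category OGraph of open-graphs is a strong epimorphism if and only if it is surjective on points and edges. -/

import Mathlib

open CategoryTheory Limits

/-! Directed graphs as `E ⇉ P` data, the type graph `2_G`, the slice category of
`2_G`-typed graphs, and the category `OGraph` of open-graphs. -/

structure PreGraph : Type 1 where
  E : Type
  P : Type
  s : E → P
  t : E → P

/-- The points of the type graph `2_G`: vertices `V` and edge-points `ε`. -/
inductive TyP : Type
  | V : TyP
  | eps : TyP
  deriving DecidableEq

/-- The edges of the type graph `2_G`: `V → ε`, `ε → V` and the loop on `ε`. -/
inductive TyE : Type
  | ve : TyE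
  | ev : TyE
  | loop : TyE
  deriving DecidableEq

/-- The type graph `2_G`. -/
def twoG : PreGraph where
  E := TyE
  P := TyP
  s e := match e with | .ve => .V | .ev => .eps | .loop => .eps
  t e := match e with | .ve => .eps | .ev => .V | .loop => .eps

structure GraphHom (G H : PreGraph) : Type where
  pe : G.E → H.E
  pp : G.P → H.P
  hs : ∀ e, H.s (pe e) = pp (G.s e)
  ht : ∀ e, H.t (pe e) = pp (G.t e)

def GraphHom.idHom (G : PreGraph) : GraphHom G G :=
  ⟨fun e => e, fun p => p, fun _ => rfl, fun _ => rfl⟩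

def GraphHom.comp {G H K : PreGraph} (f : GraphHom G H) (g : GraphHom H K) :
    GraphHom G K :=
  ⟨fun e => g.pe (f.pe e), fun p => g.pp (f.pp p),
   fun e => by rw [g.hs, f.hs], fun e => by rw [g.ht, f.ht]⟩

/-- An object of the slice category `Graph/2_G`: a graph together with a typing
morphism into `2_G`. -/
structure TypedGraph : Type 1 where
  G : PreGraph
  τ : GraphHom G twoG

/-- A morphism of `2_G`-typed graphs: a graph morphism commuting with the typing. -/
@[ext]
structure TypedHom (X Y : TypedGraph) : Type where
  h : GraphHom X.G Y.G
  comm_pp : ∀ p, Y.τ.pp (h.pp p) = X.τ.pp p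
  comm_pe : ∀ e, Y.τ.pe (h.pe e) = X.τ.pe e

def TypedHom.idHom (X : TypedGraph) : TypedHom X X :=
  ⟨GraphHom.idHom X.G, fun _ => rfl, fun _ => rfl⟩

def TypedHom.comp {X Y Z : TypedGraph} (f : TypedHom X Y) (g : TypedHom Y Z) :
    TypedHom X Z :=
  ⟨f.h.comp g.h,
   fun p => by show Z.τ.pp (g.h.pp (f.h.pp p)) = _; rw [g.comm_pp, f.comm_pp],
   fun e => by show Z.τ.pe (g.h.pe (f.h.pe e)) = _; rw [g.comm_pe, f.comm_pe]⟩

instance : Category TypedGraph where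
  Hom := TypedHom
  id := TypedHom.idHom
  comp := TypedHom.comp
  id_comp _ := rfl
  comp_id _ := rfl
  assoc _ _ _ := rfl

/-- An open-graph: a `2_G`-typed graph in which every edge-point has at most one
in-edge and at most one out-edge. -/
structure OGraph : Type 1 where
  X : TypedGraph
  open_in : ∀ p, X.τ.pp p = TyP.eps →
    ∀ e₁ e₂, X.G.t e₁ = p → X.G.t e₂ = p → e₁ = e₂
  open_out : ∀ p, X.τ.pp p = TyP.eps →
    ∀ e₁ e₂, X.G.s e₁ = p → X.G.s e₂ = p → e₁ = e₂

/-- A typed-graph morphism is full on vertices when every edge adjacent to the image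
`f(v)` of a vertex `v` is the image of an edge adjacent to `v`. -/
def FullOnVertices {X Y : TypedGraph} (f : TypedHom X Y) : Prop :=
  ∀ v, X.τ.pp v = TyP.V → ∀ e, (Y.G.s e = f.h.pp v ∨ Y.G.t e = f.h.pp v) →
    ∃ e', f.h.pe e' = e ∧ (X.G.s e' = v ∨ X.G.t e' = v)

/-- A morphism of open-graphs: a typed-graph morphism that is full on vertices. -/
@[ext]
structure OHom (G H : OGraph) : Type where
  f : TypedHom G.X H.X
  full : FullOnVertices f

theorem fullOnVertices_id (G : OGraph) : FullOnVertices (TypedHom.idHom G.X) :=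
  fun _ _ e he => ⟨e, rfl, he⟩

theorem fullOnVertices_comp {G H K : OGraph} (f : TypedHom G.X H.X)
    (g : TypedHom H.X K.X) (hf : FullOnVertices f) (hg : FullOnVertices g) :
    FullOnVertices (f.comp g) := by
  intro v hv e he
  have hfv : H.X.τ.pp (f.h.pp v) = TyP.V := by rw [f.comm_pp]; exact hv
  obtain ⟨e', he', hadj'⟩ := hg (f.h.pp v) hfv e he
  obtain ⟨e'', he'', hadj''⟩ := hf v hv e' hadj'
  exact ⟨e'', by show g.h.pe (f.h.pe e'') = e; rw [he'', he'], hadj''⟩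

def OHom.idHom (G : OGraph) : OHom G G := ⟨TypedHom.idHom G.X, fullOnVertices_id G⟩

def OHom.comp {G H K : OGraph} (φ : OHom G H) (ψ : OHom H K) : OHom G K :=
  ⟨φ.f.comp ψ.f, fullOnVertices_comp φ.f ψ.f φ.full ψ.full⟩

instance : Category OGraph where
  Hom := OHom
  id := OHom.idHom
  comp := OHom.comp
  id_comp _ := rfl
  comp_id _ := rfl
  assoc _ _ _ := rfl

/-- The point map of an open-graph morphism. -/
def OHom.pp {G H : OGraph} (φ : OHom G H) : G.X.G.P → H.X.G.P := φ.f.h.pp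

/-- The edge map of an open-graph morphism. -/
def OHom.pe {G H : OGraph} (φ : OHom G H) : G.X.G.E → H.X.G.E := φ.f.h.pe

/-- The embedding functor `S : OGraph ⥤ Graph/2_G`. -/
def S : OGraph ⥤ TypedGraph where
  obj G := G.X
  map f := f.f
  map_id _ := rfl
  map_comp _ _ := rfl

/-- An edge-point of an open-graph. -/
def IsEdgePoint (G : OGraph) (p : G.X.G.P) : Prop := G.X.τ.pp p = TyP.eps

/-- An input: an edge-point with no in-edges. -/
def IsInput (G : OGraph) (p : G.X.G.P) : Prop :=
  IsEdgePoint G p ∧ ∀ e, G.X.G.t e ≠ p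

/-- An output: an edge-point with no out-edges. -/
def IsOutput (G : OGraph) (p : G.X.G.P) : Prop :=
  IsEdgePoint G p ∧ ∀ e, G.X.G.s e ≠ p

/-- The boundary graph of `G`: the point graph `In(G) + Out(G)`. -/
def boundaryGraph (G : OGraph) : OGraph where
  X := { G := { E := Empty
                P := {p // IsInput G p} ⊕ {p // IsOutput G p}
                s := fun e => e.elim
                t := fun e => e.elim }
         τ := { pe := fun e => e.elim
                pp := fun _ => TyP.eps
                hs := fun e => e.elim
                ht := fun e => e.elim } }
  open_in := fun _ _ e => e.elim
  open_out := fun _ _ e => e.elim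

/-- The boundary map `b : In(G) + Out(G) ⟶ G`. -/
def boundaryMap (G : OGraph) : boundaryGraph G ⟶ G :=
  OHom.mk
    (TypedHom.mk
      (GraphHom.mk (fun e => e.elim)
        (fun p => Sum.elim (fun q => q.val) (fun q => q.val) p)
        (fun e => e.elim) (fun e => e.elim))
      (by rintro (⟨p, hp⟩ | ⟨p, hp⟩) <;> exact hp.1)
      (fun e => e.elim))
    (by rintro (⟨p, hp⟩ | ⟨p, hp⟩) hv <;> exact absurd hv (by simp [boundaryGraph]))

/-- An isolated point: both an input and an output. -/
def IsIsolated (G : OGraph) (p : G.X.G.P) : Prop := IsInput G p ∧ IsOutput G p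

/-- A point graph: an open-graph consisting only of (isolated) edge-points. -/
def IsPointGraph (G : OGraph) : Prop :=
  (∀ p, IsEdgePoint G p) ∧ (G.X.G.E → False)

/-- A boundary-coherent span of open-graphs. -/
def BoundaryCoherent {G H₁ H₂ : OGraph} (f : G ⟶ H₁) (g : G ⟶ H₂) : Prop :=
  Mono f ∧ Mono g ∧
  (∀ p, IsInput G p → ¬(IsInput H₁ (OHom.pp f p) ∧ IsInput H₂ (OHom.pp g p))) ∧
  (∀ p, IsOutput G p → ¬(IsOutput H₁ (OHom.pp f p) ∧ IsOutput H₂ (OHom.pp g p)))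

/-! ### Auxiliary material for the proof -/

section Aux

lemma GraphHom.ext' {G H : PreGraph} {a b : GraphHom G H} (h1 : a.pe = b.pe)
    (h2 : a.pp = b.pp) : a = b := by
  cases a; cases b; cases h1; cases h2; rfl

lemma OHom.ext' {G H : OGraph} {a b : G ⟶ H} (h1 : OHom.pe a = OHom.pe b)
    (h2 : OHom.pp a = OHom.pp b) : a = b := by
  obtain ⟨fa, _⟩ := a; obtain ⟨fb, _⟩ := b
  have hh : fa.h = fb.h := GraphHom.ext' h1 h2
  have : fa = fb := TypedHom.ext hh
  cases this; rfl

@[simp] lemma OHom.comp_pp {G H K : OGraph} (φ : G ⟶ H) (ψ : H ⟶ K) (p) :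
    OHom.pp (φ ≫ ψ) p = OHom.pp ψ (OHom.pp φ p) := rfl

@[simp] lemma OHom.comp_pe {G H K : OGraph} (φ : G ⟶ H) (ψ : H ⟶ K) (e) :
    OHom.pe (φ ≫ ψ) e = OHom.pe ψ (OHom.pe φ e) := rfl

@[simp] lemma OHom.id_pp {G : OGraph} (p) : OHom.pp (𝟙 G) p = p := rfl
@[simp] lemma OHom.id_pe {G : OGraph} (e) : OHom.pe (𝟙 G) e = e := rfl

lemma hom_s {G H : OGraph} (φ : G ⟶ H) (e) :
    H.X.G.s (OHom.pe φ e) = OHom.pp φ (G.X.G.s e) := φ.f.h.hs e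

lemma hom_t {G H : OGraph} (φ : G ⟶ H) (e) :
    H.X.G.t (OHom.pe φ e) = OHom.pp φ (G.X.G.t e) := φ.f.h.ht e

lemma hom_pp_comm {G H : OGraph} (φ : G ⟶ H) (p) :
    H.X.τ.pp (OHom.pp φ p) = G.X.τ.pp p := φ.f.comm_pp p

lemma hom_pe_comm {G H : OGraph} (φ : G ⟶ H) (e) :
    H.X.τ.pe (OHom.pe φ e) = G.X.τ.pe e := φ.f.comm_pe e

lemma hom_full {G H : OGraph} (φ : G ⟶ H) : FullOnVertices φ.f := φ.full

lemma src_type (X : OGraph) (e) :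
    X.X.τ.pp (X.X.G.s e) = twoG.s (X.X.τ.pe e) := (X.X.τ.hs e).symm

lemma tgt_type (X : OGraph) (e) :
    X.X.τ.pp (X.X.G.t e) = twoG.t (X.X.τ.pe e) := (X.X.τ.ht e).symm

/-- If the source of an edge is a vertex, the edge is typed `ve`. -/
lemma edge_ve (X : OGraph) (e) (h : X.X.τ.pp (X.X.G.s e) = TyP.V) :
    X.X.τ.pe e = TyE.ve := by
  have h' := (src_type X e).symm.trans h
  cases hτ : X.X.τ.pe e <;> rw [hτ] at h' <;> simp [twoG] at h' <;> rfl

/-- If the target of an edge is a vertex, the edge is typed `ev`. -/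
lemma edge_ev (X : OGraph) (e) (h : X.X.τ.pp (X.X.G.t e) = TyP.V) :
    X.X.τ.pe e = TyE.ev := by
  have h' := (tgt_type X e).symm.trans h
  cases hτ : X.X.τ.pe e <;> rw [hτ] at h' <;> simp [twoG] at h' <;> rfl

lemma epi_of_surj {G H : OGraph} {f : G ⟶ H}
    (h1 : Function.Surjective (OHom.pp f)) (h2 : Function.Surjective (OHom.pe f)) :
    Epi f := by
  refine ⟨fun {Z} a b hab => OHom.ext' (funext fun e => ?_) (funext fun p => ?_)⟩
  · obtain ⟨e', rfl⟩ := h2 e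
    exact congrArg (fun φ => OHom.pe φ e') hab
  · obtain ⟨p', rfl⟩ := h1 p
    exact congrArg (fun φ => OHom.pp φ p') hab

lemma mono_of_inj {G H : OGraph} {f : G ⟶ H}
    (h1 : Function.Injective (OHom.pp f)) (h2 : Function.Injective (OHom.pe f)) :
    Mono f := by
  refine ⟨fun {Z} a b hab => OHom.ext' (funext fun e => ?_) (funext fun p => ?_)⟩
  · exact h2 (congrArg (fun φ => OHom.pe φ e) hab)
  · exact h1 (congrArg (fun φ => OHom.pp φ p) hab)

/-- The one-`ε`-point open-graph. -/
def ptG : OGraph where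
  X := { G := ⟨Empty, Unit, fun e => e.elim, fun e => e.elim⟩
         τ := ⟨fun e => e.elim, fun _ => TyP.eps, fun e => e.elim, fun e => e.elim⟩ }
  open_in := fun _ _ e => e.elim
  open_out := fun _ _ e => e.elim

def ptHom (X : OGraph) (p : X.X.G.P) (hp : X.X.τ.pp p = TyP.eps) : ptG ⟶ X where
  f := { h := ⟨fun e => e.elim, fun _ => p, fun e => e.elim, fun e => e.elim⟩
         comm_pp := fun _ => hp
         comm_pe := fun e => e.elim }
  full := by intro v hv; exact absurd hv (by simp [ptG])

/-- Injectivity of monos on `ε`-points. -/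
lemma mono_pp_inj_eps {X Y : OGraph} (z : X ⟶ Y) [Mono z] (p1 p2 : X.X.G.P)
    (h1 : X.X.τ.pp p1 = TyP.eps) (h : OHom.pp z p1 = OHom.pp z p2) : p1 = p2 := by
  have h2 : X.X.τ.pp p2 = TyP.eps := by
    rw [← hom_pp_comm z p2, ← h, hom_pp_comm z p1, h1]
  have key : ptHom X p1 h1 ≫ z = ptHom X p2 h2 ≫ z :=
    OHom.ext' (funext fun e => e.elim) (funext fun _ => h)
  have := (cancel_mono z).mp key
  exact congrArg (fun φ => OHom.pp φ ()) this

/-- Injectivity of monos on edges. -/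
lemma mono_pe_inj {X Y : OGraph} (z : X ⟶ Y) [Mono z] :
    Function.Injective (OHom.pe z) := by
  intro e1 e2 h
  cases hτ : X.X.τ.pe e1 with
  | ev =>
    have hε : X.X.τ.pp (X.X.G.s e1) = TyP.eps := by
      rw [src_type, hτ]; rfl
    have hsrc : X.X.G.s e1 = X.X.G.s e2 :=
      mono_pp_inj_eps z _ _ hε (by rw [← hom_s, ← hom_s, h])
    exact X.open_out (X.X.G.s e1) hε e1 e2 rfl hsrc.symm
  | ve =>
    have hε : X.X.τ.pp (X.X.G.t e1) = TyP.eps := by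
      rw [tgt_type, hτ]; rfl
    have htgt : X.X.G.t e1 = X.X.G.t e2 :=
      mono_pp_inj_eps z _ _ hε (by rw [← hom_t, ← hom_t, h])
    exact X.open_in (X.X.G.t e1) hε e1 e2 rfl htgt.symm
  | loop =>
    have hε : X.X.τ.pp (X.X.G.t e1) = TyP.eps := by
      rw [tgt_type, hτ]; rfl
    have htgt : X.X.G.t e1 = X.X.G.t e2 :=
      mono_pp_inj_eps z _ _ hε (by rw [← hom_t, ← hom_t, h])
    exact X.open_in (X.X.G.t e1) hε e1 e2 rfl htgt.symm

section Star

open Classical in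
/-- The star of a vertex `w` of `Y`: the vertex together with a private copy of each
adjacent edge and its `ε`-endpoint. -/
noncomputable def starG (Y : OGraph) (w : Y.X.G.P) (hw : Y.X.τ.pp w = TyP.V) :
    OGraph where
  X :=
    { G := { E := {e : Y.X.G.E // Y.X.G.s e = w ∨ Y.X.G.t e = w}
             P := Unit ⊕ {e : Y.X.G.E // Y.X.G.s e = w ∨ Y.X.G.t e = w}
             s := fun e => if Y.X.G.s e.val = w then Sum.inl () else Sum.inr e
             t := fun e => if Y.X.G.t e.val = w then Sum.inl () else Sum.inr e }
      τ := { pe := fun e => Y.X.τ.pe e.val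
             pp := fun p => Sum.elim (fun _ => TyP.V) (fun _ => TyP.eps) p
             hs := by
               intro e
               by_cases h : Y.X.G.s e.val = w
               · simp only [h, if_pos]
                 show twoG.s (Y.X.τ.pe e.val) = TyP.V
                 rw [← src_type, h, hw]
               · simp only [h, if_neg, not_false_iff]
                 show twoG.s (Y.X.τ.pe e.val) = TyP.eps
                 have ht : Y.X.G.t e.val = w := e.property.resolve_left h
                 have : Y.X.τ.pe e.val = TyE.ev := edge_ev Y e.val (by rw [ht, hw])
                 rw [this]; rfl
             ht := by
               intro e
               by_cases h : Y.X.G.t e.val = w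
               · simp only [h, if_pos]
                 show twoG.t (Y.X.τ.pe e.val) = TyP.V
                 rw [← tgt_type, h, hw]
               · simp only [h, if_neg, not_false_iff]
                 show twoG.t (Y.X.τ.pe e.val) = TyP.eps
                 have hs' : Y.X.G.s e.val = w := e.property.resolve_right h
                 have : Y.X.τ.pe e.val = TyE.ve := edge_ve Y e.val (by rw [hs', hw])
                 rw [this]; rfl } }
  open_in := by
    rintro (⟨⟩ | e0) hp e1 e2 h1 h2
    · exact absurd hp (by intro h; cases h)
    · replace h1 : (if Y.X.G.t e1.val = w then Sum.inl () else Sum.inr e1) = Sum.inr e0 := h1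
      replace h2 : (if Y.X.G.t e2.val = w then Sum.inl () else Sum.inr e2) = Sum.inr e0 := h2
      by_cases hb1 : Y.X.G.t e1.val = w
      · rw [if_pos hb1] at h1; exact absurd h1 (by simp)
      · rw [if_neg hb1] at h1
        by_cases hb2 : Y.X.G.t e2.val = w
        · rw [if_pos hb2] at h2; exact absurd h2 (by simp)
        · rw [if_neg hb2] at h2
          simp only [Sum.inr.injEq] at h1 h2
          rw [h1, h2]
  open_out := by
    rintro (⟨⟩ | e0) hp e1 e2 h1 h2
    · exact absurd hp (by intro h; cases h)
    · replace h1 : (if Y.X.G.s e1.val = w then Sum.inl () else Sum.inr e1) = Sum.inr e0 := h1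
      replace h2 : (if Y.X.G.s e2.val = w then Sum.inl () else Sum.inr e2) = Sum.inr e0 := h2
      by_cases hb1 : Y.X.G.s e1.val = w
      · rw [if_pos hb1] at h1; exact absurd h1 (by simp)
      · rw [if_neg hb1] at h1
        by_cases hb2 : Y.X.G.s e2.val = w
        · rw [if_pos hb2] at h2; exact absurd h2 (by simp)
        · rw [if_neg hb2] at h2
          simp only [Sum.inr.injEq] at h1 h2
          rw [h1, h2]

open Classical in
/-- The canonical map from the star of `w` into `Y`. -/
noncomputable def starHom (Y : OGraph) (w : Y.X.G.P) (hw : Y.X.τ.pp w = TyP.V) :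
    starG Y w hw ⟶ Y where
  f :=
    { h := { pe := fun e => e.val
             pp := fun p => Sum.elim (fun _ => w)
               (fun e => if Y.X.G.s e.val = w then Y.X.G.t e.val else Y.X.G.s e.val) p
             hs := by
               intro e
               show Y.X.G.s e.val = Sum.elim _ _ (if Y.X.G.s e.val = w then _ else _)
               by_cases h : Y.X.G.s e.val = w
               · simp only [h, if_pos]; rfl
               · simp only [h, if_neg, not_false_iff, Sum.elim_inr, if_neg h]
                 exact (if_neg h).symm
             ht := by
               intro e
               show Y.X.G.t e.val = Sum.elim _ _ (if Y.X.G.t e.val = w then _ else _)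
               by_cases h : Y.X.G.t e.val = w
               · simp only [h, if_pos]; rfl
               · simp only [h, if_neg, not_false_iff, Sum.elim_inr]
                 have hs' : Y.X.G.s e.val = w := e.property.resolve_right h
                 exact (if_pos hs').symm
      }
      comm_pp := by
        rintro (⟨⟩ | e)
        · exact hw
        · show Y.X.τ.pp (if Y.X.G.s e.val = w then Y.X.G.t e.val else Y.X.G.s e.val)
            = TyP.eps
          by_cases h : Y.X.G.s e.val = w
          · rw [if_pos h]
            have : Y.X.τ.pe e.val = TyE.ve := edge_ve Y e.val (by rw [h, hw])
            rw [tgt_type, this]; rfl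
          · rw [if_neg h]
            have ht : Y.X.G.t e.val = w := e.property.resolve_left h
            have : Y.X.τ.pe e.val = TyE.ev := edge_ev Y e.val (by rw [ht, hw])
            rw [src_type, this]; rfl
      comm_pe := fun _ => rfl }
  full := by
    rintro (⟨⟩ | e0) hv e he
    · replace he : Y.X.G.s e = w ∨ Y.X.G.t e = w := he
      refine ⟨⟨e, he⟩, rfl, ?_⟩
      by_cases h : Y.X.G.s e = w
      · left
        have h0 : (starG Y w hw).X.G.s ⟨e, he⟩
            = if Y.X.G.s e = w then Sum.inl () else Sum.inr ⟨e, he⟩ := rfl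
        rw [h0, if_pos h]
      · right
        have ht' : Y.X.G.t e = w := he.resolve_left h
        have h0 : (starG Y w hw).X.G.t ⟨e, he⟩
            = if Y.X.G.t e = w then Sum.inl () else Sum.inr ⟨e, he⟩ := rfl
        rw [h0, if_pos ht']
    · exact absurd hv (by intro h; cases h)

end Star

section MonoInj

open Classical in
lemma star_lift_exists {X Y : OGraph} (z : X ⟶ Y) (hinj : Function.Injective (OHom.pe z))
    (w : Y.X.G.P) (hw : Y.X.τ.pp w = TyP.V) (v : X.X.G.P) (hvw : OHom.pp z v = w) :
    ∃ a : starG Y w hw ⟶ X,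
      a ≫ z = starHom Y w hw ∧ OHom.pp a (Sum.inl ()) = v := by
  have hvV : X.X.τ.pp v = TyP.V := by rw [← hom_pp_comm z v, hvw, hw]
  -- choose preimages of the star edges
  have hch : ∀ e : (starG Y w hw).X.G.E, ∃ e', OHom.pe z e' = e.val ∧
      (X.X.G.s e' = v ∨ X.X.G.t e' = v) := by
    intro e
    refine hom_full z v hvV e.val ?_
    show Y.X.G.s e.val = OHom.pp z v ∨ Y.X.G.t e.val = OHom.pp z v
    rw [hvw]; exact e.property
  choose pick hpe hadj using hch
  -- basic facts about the picked edges
  have key_s : ∀ e : (starG Y w hw).X.G.E,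
      X.X.G.s (pick e) = v ↔ Y.X.G.s e.val = w := by
    intro e
    constructor
    · intro h
      rw [← hpe e, hom_s, h, hvw]
    · intro h
      rcases hadj e with h' | h'
      · exact h'
      · exfalso
        have htV : X.X.τ.pp (X.X.G.t (pick e)) = TyP.V := by rw [h', hvV]
        have hev : X.X.τ.pe (pick e) = TyE.ev := edge_ev X _ htV
        have : Y.X.τ.pp (Y.X.G.s e.val) = TyP.eps := by
          rw [← hpe e, hom_s, hom_pp_comm, src_type, hev]; rfl
        rw [h, hw] at this
        exact absurd this (by simp)
  have key_t : ∀ e : (starG Y w hw).X.G.E,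
      X.X.G.t (pick e) = v ↔ Y.X.G.t e.val = w := by
    intro e
    constructor
    · intro h
      rw [← hpe e, hom_t, h, hvw]
    · intro h
      rcases hadj e with h' | h'
      · exfalso
        have hsV : X.X.τ.pp (X.X.G.s (pick e)) = TyP.V := by rw [h', hvV]
        have hve : X.X.τ.pe (pick e) = TyE.ve := edge_ve X _ hsV
        have : Y.X.τ.pp (Y.X.G.t e.val) = TyP.eps := by
          rw [← hpe e, hom_t, hom_pp_comm, tgt_type, hve]; rfl
        rw [h, hw] at this
        exact absurd this (by simp)
      · exact h'
  refine ⟨⟨⟨⟨fun e => pick e,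
      fun p => Sum.elim (fun _ => v)
        (fun e => if X.X.G.s (pick e) = v then X.X.G.t (pick e) else X.X.G.s (pick e)) p,
      ?_, ?_⟩, ?_, ?_⟩, ?_⟩, ?_, ?_⟩
  · -- hs
    intro e
    show X.X.G.s (pick e) = Sum.elim _ _
      (if Y.X.G.s e.val = w then Sum.inl () else Sum.inr e)
    by_cases h : Y.X.G.s e.val = w
    · rw [if_pos h]
      exact (key_s e).mpr h
    · rw [if_neg h]
      have : ¬ X.X.G.s (pick e) = v := fun hc => h ((key_s e).mp hc)
      show X.X.G.s (pick e) = if X.X.G.s (pick e) = v then _ else X.X.G.s (pick e)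
      rw [if_neg this]
  · -- ht
    intro e
    show X.X.G.t (pick e) = Sum.elim _ _
      (if Y.X.G.t e.val = w then Sum.inl () else Sum.inr e)
    by_cases h : Y.X.G.t e.val = w
    · rw [if_pos h]
      exact (key_t e).mpr h
    · rw [if_neg h]
      have hns : X.X.G.s (pick e) = v := by
        rcases hadj e with h' | h'
        · exact h'
        · exact absurd ((key_t e).mp h') h
      show X.X.G.t (pick e) = if X.X.G.s (pick e) = v then X.X.G.t (pick e) else _
      rw [if_pos hns]
  · -- comm_pp
    rintro (⟨⟩ | e)
    · exact hvV
    · show X.X.τ.pp (if X.X.G.s (pick e) = v then X.X.G.t (pick e) else X.X.G.s (pick e))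
        = TyP.eps
      by_cases h : X.X.G.s (pick e) = v
      · rw [if_pos h]
        have : X.X.τ.pe (pick e) = TyE.ve := edge_ve X _ (by rw [h, hvV])
        rw [tgt_type, this]; rfl
      · rw [if_neg h]
        have h' : X.X.G.t (pick e) = v := (hadj e).resolve_left h
        have : X.X.τ.pe (pick e) = TyE.ev := edge_ev X _ (by rw [h', hvV])
        rw [src_type, this]; rfl
  · -- comm_pe
    intro e
    show X.X.τ.pe (pick e) = Y.X.τ.pe e.val
    rw [← hpe e, hom_pe_comm]
  · -- fullness
    rintro (⟨⟩ | e0) hv e he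
    · replace he : X.X.G.s e = v ∨ X.X.G.t e = v := he
      have hadjY : Y.X.G.s (OHom.pe z e) = w ∨ Y.X.G.t (OHom.pe z e) = w := by
        rcases he with h | h
        · left; rw [hom_s, h, hvw]
        · right; rw [hom_t, h, hvw]
      refine ⟨⟨OHom.pe z e, hadjY⟩, hinj (hpe ⟨OHom.pe z e, hadjY⟩), ?_⟩
      have hpk : pick ⟨OHom.pe z e, hadjY⟩ = e := hinj (hpe ⟨OHom.pe z e, hadjY⟩)
      rcases he with h | h
      · left
        have h0 : (starG Y w hw).X.G.s ⟨OHom.pe z e, hadjY⟩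
            = if Y.X.G.s (OHom.pe z e) = w then Sum.inl ()
              else Sum.inr ⟨OHom.pe z e, hadjY⟩ := rfl
        rw [h0, if_pos (by rw [hom_s, h, hvw])]
      · right
        have h0 : (starG Y w hw).X.G.t ⟨OHom.pe z e, hadjY⟩
            = if Y.X.G.t (OHom.pe z e) = w then Sum.inl ()
              else Sum.inr ⟨OHom.pe z e, hadjY⟩ := rfl
        rw [h0, if_pos (by rw [hom_t, h, hvw])]
    · exact absurd hv (by intro h; cases h)
  · -- a ≫ z = starHom
    refine OHom.ext' (funext fun e => ?_) (funext fun p => ?_)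
    · exact hpe e
    · rcases p with ⟨⟩ | e
      · exact hvw
      · show OHom.pp z (if X.X.G.s (pick e) = v then X.X.G.t (pick e) else X.X.G.s (pick e))
          = if Y.X.G.s e.val = w then Y.X.G.t e.val else Y.X.G.s e.val
        by_cases h : X.X.G.s (pick e) = v
        · rw [if_pos h, if_pos ((key_s e).mp h), ← hpe e, hom_t]
        · have : ¬ Y.X.G.s e.val = w := fun hc => h ((key_s e).mpr hc)
          rw [if_neg h, if_neg this, ← hpe e, hom_s]
  · rfl

lemma mono_pp_inj {X Y : OGraph} (z : X ⟶ Y) [Mono z] :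
    Function.Injective (OHom.pp z) := by
  intro p1 p2 h
  cases hτ : X.X.τ.pp p1 with
  | eps => exact mono_pp_inj_eps z p1 p2 hτ h
  | V =>
    have hw : Y.X.τ.pp (OHom.pp z p1) = TyP.V := by rw [hom_pp_comm, hτ]
    obtain ⟨a1, ha1, hv1⟩ := star_lift_exists z (mono_pe_inj z) (OHom.pp z p1) hw p1 rfl
    obtain ⟨a2, ha2, hv2⟩ := star_lift_exists z (mono_pe_inj z) (OHom.pp z p1) hw p2 h.symm
    have : a1 = a2 := (cancel_mono z).mp (ha1.trans ha2.symm)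
    rw [← hv1, ← hv2, this]

lemma pick_hadj_uses : True := trivial

end MonoInj

section Image

/-- The image of an open-graph morphism. -/
def imGraph {G H : OGraph} (f : G ⟶ H) : OGraph where
  X :=
    { G := { E := {e : H.X.G.E // ∃ e', OHom.pe f e' = e}
             P := {p : H.X.G.P // ∃ p', OHom.pp f p' = p}
             s := fun e => ⟨H.X.G.s e.val, e.property.choose_spec ▸
               ⟨G.X.G.s e.property.choose, (hom_s f e.property.choose).symm⟩⟩
             t := fun e => ⟨H.X.G.t e.val, e.property.choose_spec ▸
               ⟨G.X.G.t e.property.choose, (hom_t f e.property.choose).symm⟩⟩ }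
      τ := { pe := fun e => H.X.τ.pe e.val
             pp := fun p => H.X.τ.pp p.val
             hs := fun e => H.X.τ.hs e.val
             ht := fun e => H.X.τ.ht e.val } }
  open_in := fun p hp e1 e2 h1 h2 =>
    Subtype.ext (H.open_in p.val hp e1.val e2.val
      (congrArg Subtype.val h1) (congrArg Subtype.val h2))
  open_out := fun p hp e1 e2 h1 h2 =>
    Subtype.ext (H.open_out p.val hp e1.val e2.val
      (congrArg Subtype.val h1) (congrArg Subtype.val h2))

/-- The inclusion of the image. -/
def imIncl {G H : OGraph} (f : G ⟶ H) : imGraph f ⟶ H where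
  f := { h := ⟨fun e => e.val, fun p => p.val, fun _ => rfl, fun _ => rfl⟩
         comm_pp := fun _ => rfl
         comm_pe := fun _ => rfl }
  full := by
    rintro ⟨p, g, hg⟩ hv e he
    replace he : H.X.G.s e = p ∨ H.X.G.t e = p := he
    have hgV : G.X.τ.pp g = TyP.V := by
      rw [← hom_pp_comm f g, hg]; exact hv
    obtain ⟨e', he', hadj⟩ := hom_full f g hgV e (by
      show H.X.G.s e = OHom.pp f g ∨ H.X.G.t e = OHom.pp f g
      rw [hg]; exact he)
    refine ⟨⟨e, e', he'⟩, rfl, ?_⟩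
    rcases he with h | h
    · exact Or.inl (Subtype.ext h)
    · exact Or.inr (Subtype.ext h)

lemma imIncl_mono {G H : OGraph} (f : G ⟶ H) : Mono (imIncl f) :=
  mono_of_inj (fun _ _ h => Subtype.ext h) (fun _ _ h => Subtype.ext h)

/-- The corestriction of `f` to its image. -/
def imRestrict {G H : OGraph} (f : G ⟶ H) : G ⟶ imGraph f where
  f := { h := ⟨fun e => ⟨OHom.pe f e, e, rfl⟩, fun p => ⟨OHom.pp f p, p, rfl⟩,
               fun e => Subtype.ext (hom_s f e), fun e => Subtype.ext (hom_t f e)⟩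
         comm_pp := fun p => hom_pp_comm f p
         comm_pe := fun e => hom_pe_comm f e }
  full := by
    intro v hv e he
    replace he : H.X.G.s e.val = OHom.pp f v ∨ H.X.G.t e.val = OHom.pp f v := by
      rcases he with h | h
      · exact Or.inl (congrArg Subtype.val h)
      · exact Or.inr (congrArg Subtype.val h)
    obtain ⟨e', he', hadj⟩ := hom_full f v hv e.val he
    exact ⟨e', Subtype.ext he', hadj⟩

lemma imRestrict_comp {G H : OGraph} (f : G ⟶ H) : imRestrict f ≫ imIncl f = f :=
  OHom.ext' (funext fun _ => rfl) (funext fun _ => rfl)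

end Image

end Aux

/-- A morphism in `OGraph` is a strong epimorphism iff it is surjective on points and
edges. -/
theorem ograph_strongEpi_iff_surjective {G H : OGraph} (f : G ⟶ H) :
    StrongEpi f ↔ (Function.Surjective (OHom.pp f) ∧ Function.Surjective (OHom.pe f)) := by
  constructor
  · intro st
    haveI := st
    haveI := imIncl_mono f
    haveI : HasLiftingProperty f (imIncl f) := StrongEpi.llp (imIncl f)
    have sq : CommSq (imRestrict f) f (imIncl f) (𝟙 H) :=
      ⟨by rw [imRestrict_comp, Category.comp_id]⟩
    have hl := sq.fac_right
    constructor
    · intro p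
      refine ⟨(OHom.pp sq.lift p).property.choose, ?_⟩
      have h1 : OHom.pp (sq.lift ≫ imIncl f) p = p := by rw [hl]; rfl
      exact (OHom.pp sq.lift p).property.choose_spec.trans h1
    · intro e
      refine ⟨(OHom.pe sq.lift e).property.choose, ?_⟩
      have h1 : OHom.pe (sq.lift ≫ imIncl f) e = e := by rw [hl]; rfl
      exact (OHom.pe sq.lift e).property.choose_spec.trans h1
  · rintro ⟨hsP, hsE⟩
    refine { epi := epi_of_surj hsP hsE, llp := ?_ }
    intro X' Y' z hz
    haveI := hz
    have zppinj := mono_pp_inj z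
    have zpeinj := mono_pe_inj z
    constructor
    intro u g sq
    set secP := Function.surjInv hsP with hsecP
    set secE := Function.surjInv hsE with hsecE
    have hsecP_eq : ∀ p, OHom.pp f (secP p) = p := fun p => Function.surjInv_eq hsP p
    have hsecE_eq : ∀ e, OHom.pe f (secE e) = e := fun e => Function.surjInv_eq hsE e
    have hcommP : ∀ p, OHom.pp z (OHom.pp u p) = OHom.pp g (OHom.pp f p) :=
      fun p => congrArg (fun φ => OHom.pp φ p) sq.w
    have hcommE : ∀ e, OHom.pe z (OHom.pe u e) = OHom.pe g (OHom.pe f e) :=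
      fun e => congrArg (fun φ => OHom.pe φ e) sq.w
    have hzl_pp : ∀ p, OHom.pp z (OHom.pp u (secP p)) = OHom.pp g p :=
      fun p => (hcommP _).trans (by rw [hsecP_eq])
    have hzl_pe : ∀ e, OHom.pe z (OHom.pe u (secE e)) = OHom.pe g e :=
      fun e => (hcommE _).trans (by rw [hsecE_eq])
    refine ⟨⟨⟨⟨⟨⟨fun e => OHom.pe u (secE e), fun p => OHom.pp u (secP p),
        ?_, ?_⟩, ?_, ?_⟩, ?_⟩, ?_, ?_⟩⟩⟩
    · -- hs
      intro e
      apply zppinj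
      show OHom.pp z (X'.X.G.s (OHom.pe u (secE e))) = OHom.pp z (OHom.pp u (secP (H.X.G.s e)))
      rw [← hom_s z, hzl_pe, hom_s g, hzl_pp]
    · -- ht
      intro e
      apply zppinj
      show OHom.pp z (X'.X.G.t (OHom.pe u (secE e))) = OHom.pp z (OHom.pp u (secP (H.X.G.t e)))
      rw [← hom_t z, hzl_pe, hom_t g, hzl_pp]
    · -- comm_pp
      intro p
      show X'.X.τ.pp (OHom.pp u (secP p)) = H.X.τ.pp p
      rw [hom_pp_comm u, ← hom_pp_comm f, hsecP_eq]
    · -- comm_pe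
      intro e
      show X'.X.τ.pe (OHom.pe u (secE e)) = H.X.τ.pe e
      rw [hom_pe_comm u, ← hom_pe_comm f, hsecE_eq]
    · -- fullness
      intro v hv e he
      replace he : X'.X.G.s e = OHom.pp u (secP v) ∨ X'.X.G.t e = OHom.pp u (secP v) := he
      replace hv : H.X.τ.pp v = TyP.V := hv
      have hsecV : G.X.τ.pp (secP v) = TyP.V := by
        rw [← hom_pp_comm f, hsecP_eq]; exact hv
      obtain ⟨e'', he'', hadj⟩ := hom_full u (secP v) hsecV e he
      replace he'' : OHom.pe u e'' = e := he''
      refine ⟨OHom.pe f e'', ?_, ?_⟩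
      · show OHom.pe u (secE (OHom.pe f e'')) = e
        apply zpeinj
        rw [hzl_pe, ← hcommE, he'']
      · rcases hadj with hh | hh
        · left
          show H.X.G.s (OHom.pe f e'') = v
          rw [hom_s f, hh, hsecP_eq]
        · right
          show H.X.G.t (OHom.pe f e'') = v
          rw [hom_t f, hh, hsecP_eq]
    · -- fac_left : f ≫ l = u
      refine OHom.ext' (funext fun e => ?_) (funext fun p => ?_)
      · apply zpeinj
        show OHom.pe z (OHom.pe u (secE (OHom.pe f e))) = OHom.pe z (OHom.pe u e)
        rw [hzl_pe, hcommE]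
      · apply zppinj
        show OHom.pp z (OHom.pp u (secP (OHom.pp f p))) = OHom.pp z (OHom.pp u p)
        rw [hzl_pp, hcommP]
    · -- fac_right : l ≫ z = g
      refine OHom.ext' (funext fun e => ?_) (funext fun p => ?_)
      · exact hzl_pe e
      · exact hzl_pp p
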